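/- Let $v^j : (\mathbb{C}^{nj},0) \to (\mathbb{C}^N,0)$ denote the iterated Segre mappings of a formal generic manifold $\mathcal{M}$, defined by $v^0 := 0$ and $v^j(t^1,\ldots,t^j) := \gamma(\bar v^{j-1}(t^1,\ldots,t^{j-1}), t^j)$ for a Segre variety mapping $\gamma$. Then for every nonnegative integer $j$, there exists a formal map $\xi^j : (\mathbb{C}^{n(j+1)},0) \to (\mathbb{C}^n,0)$ such that $v^{j+2}(t^1,\ldots,t^{j+1}, \xi^j(t^1,\ldots,t^{j+1})) = v^j(t^1,\ldots,t^j)$ identically as formal power series. -/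

import Mathlib

open MvPowerSeries

/-- Formal composition (substitution) of power series: `f` evaluated on the family `a`.
This is the standard substitution, meaningful when each `a s` has zero constant
coefficient (so that each coefficient of the result is a finite sum). -/
noncomputable def fsubst {σ τ : Type*} [Fintype σ] [DecidableEq σ]
    (a : σ → MvPowerSeries τ ℂ) (f : MvPowerSeries σ ℂ) : MvPowerSeries τ ℂ :=
  fun e => MvPowerSeries.coeff (R := ℂ) e
    (∑ m ∈ Finset.Iic (Finsupp.equivFunOnFinite.symm fun _ => (e.sum fun _ x => x)),
      MvPowerSeries.coeff (R := ℂ) m f • ∏ s : σ, (a s) ^ m s)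

/-- The formal partial derivative `∂f/∂x_s` of a formal power series. -/
noncomputable def pd {σ : Type*} (s : σ) (f : MvPowerSeries σ ℂ) : MvPowerSeries σ ℂ :=
  fun m => ((m s : ℂ) + 1) * MvPowerSeries.coeff (R := ℂ) (m + Finsupp.single s 1) f

/-- The iterated formal partial derivative `∂^ν f`. -/
noncomputable def iterD {σ : Type*} (ν : σ →₀ ℕ) (f : MvPowerSeries σ ℂ) :
    MvPowerSeries σ ℂ :=
  fun m => ((ν.prod fun s e => Nat.descFactorial (m s + e) e : ℕ) : ℂ) *
    MvPowerSeries.coeff (R := ℂ) (m + ν) f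

/-- A formal power series is convergent if its coefficients grow at most
geometrically. -/
def Convergent {σ : Type*} (f : MvPowerSeries σ ℂ) : Prop :=
  ∃ C r : ℝ, 0 < r ∧ ∀ m : σ →₀ ℕ,
    ‖MvPowerSeries.coeff (R := ℂ) m f‖ ≤ C * r ^ (m.sum fun _ e => e)

/-- Coefficientwise complex conjugation of a formal power series. -/
noncomputable def conjS {σ : Type*} (f : MvPowerSeries σ ℂ) : MvPowerSeries σ ℂ :=
  fun m => starRingEnd ℂ (MvPowerSeries.coeff (R := ℂ) m f)

/-- The Segre variety mapping `γ(ζ,t) = (μ(ζ,t), Q(μ(ζ,t),ζ))` associated to `μ` and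
`Q`, as a family of formal power series in the variables `(ζ,t)`; here `Z = (z,w) ∈
ℂ^n × ℂ^d`. -/
noncomputable def gamFam {n d : ℕ}
    (Q : Fin d → MvPowerSeries (Fin n ⊕ (Fin n ⊕ Fin d)) ℂ)
    (μ : Fin n → MvPowerSeries ((Fin n ⊕ Fin d) ⊕ Fin n) ℂ) :
    (Fin n ⊕ Fin d) → MvPowerSeries ((Fin n ⊕ Fin d) ⊕ Fin n) ℂ :=
  Sum.elim μ (fun j =>
    fsubst (Sum.elim μ (fun a => MvPowerSeries.X (Sum.inl a))) (Q j))

/-- The reality condition `Q(z, χ, Q̄(χ, z, w)) = w` for the defining series of a formal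
generic manifold, written in the variables `((z,w), χ)`. -/
def RealityCondition {n d : ℕ}
    (Q : Fin d → MvPowerSeries (Fin n ⊕ (Fin n ⊕ Fin d)) ℂ) : Prop :=
  ∀ j, fsubst (τ := (Fin n ⊕ Fin d) ⊕ Fin n)
    (Sum.elim (fun i => MvPowerSeries.X (Sum.inl (Sum.inl i)))
      (Sum.elim (fun c => MvPowerSeries.X (Sum.inr c))
        (fun t => fsubst
          (Sum.elim (fun i => MvPowerSeries.X (Sum.inr i))
            (Sum.elim (fun i => MvPowerSeries.X (Sum.inl (Sum.inl i)))
              (fun w => MvPowerSeries.X (Sum.inl (Sum.inr w)))))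
          (conjS (Q t)))))
    (Q j) = MvPowerSeries.X (Sum.inl (Sum.inr j))

/-- The iterated Segre mappings `v⁰ := 0`,
`v^j(t¹,…,tʲ) := γ(v̄^{j-1}(t¹,…,t^{j-1}), tʲ)` of a formal generic manifold, as
families of formal power series in the variables `(t¹,…,tʲ) ∈ (ℂ^n)^j`. -/
noncomputable def segreIter {n d : ℕ}
    (γ : (Fin n ⊕ Fin d) → MvPowerSeries ((Fin n ⊕ Fin d) ⊕ Fin n) ℂ) :
    (j : ℕ) → (Fin n ⊕ Fin d) → MvPowerSeries (Fin j × Fin n) ℂ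
  | 0, _ => 0
  | (j+1), a =>
    fsubst (Sum.elim
        (fun b => fsubst (fun p => MvPowerSeries.X ((p.1.castSucc : Fin (j+1)), p.2))
          (conjS (segreIter γ j b)))
        (fun i => MvPowerSeries.X ((Fin.last j), i)))
      (γ a)

set_option linter.unusedSectionVars false
set_option maxHeartbeats 1000000

section API

open MvPowerSeries Finsupp

variable {σ τ υ : Type*} [Fintype σ] [DecidableEq σ] [DecidableEq τ]

/-- total degree of an exponent -/
def tdeg {α : Type*} (m : α →₀ ℕ) : ℕ := m.sum fun _ x => x

lemma tdeg_add {α : Type*} (x y : α →₀ ℕ) : tdeg (x + y) = tdeg x + tdeg y := by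
  simp [tdeg, Finsupp.sum_add_index']

lemma tdeg_zero {α : Type*} : tdeg (0 : α →₀ ℕ) = 0 := by simp [tdeg]

lemma apply_le_tdeg {α : Type*} (m : α →₀ ℕ) (s : α) : m s ≤ tdeg m := by
  by_cases hs : m s = 0
  · omega
  · have hmem : s ∈ m.support := by simpa [Finsupp.mem_support_iff] using hs
    have h1 := Finset.single_le_sum (f := fun a => m a) (fun _ _ => Nat.zero_le _) hmem
    change m s ≤ ∑ x ∈ m.support, m x at h1
    have h4 : tdeg m = ∑ x ∈ m.support, m x := rfl
    omega

lemma tdeg_eq_zero_iff {α : Type*} {m : α →₀ ℕ} : tdeg m = 0 ↔ m = 0 := by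
  constructor
  · intro h
    ext a
    have := apply_le_tdeg m a
    simp only [Finsupp.coe_zero, Pi.zero_apply]
    omega
  · rintro rfl; simp [tdeg]

lemma tdeg_single {α : Type*} (a : α) (k : ℕ) : tdeg (Finsupp.single a k) = k := by
  simp [tdeg, Finsupp.sum_single_index]

lemma tdeg_eq_sum_fintype {α : Type*} [Fintype α] (m : α →₀ ℕ) :
    tdeg m = ∑ a : α, m a := by
  rw [tdeg, Finsupp.sum_fintype]; intro; rfl

/-- uniform exponent -/
noncomputable def unif (σ : Type*) [Fintype σ] (N : ℕ) : σ →₀ ℕ :=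
  Finsupp.equivFunOnFinite.symm fun _ => N

lemma unif_apply {N : ℕ} (s : σ) : unif σ N s = N := rfl

lemma mem_Iic_unif {N : ℕ} {m : σ →₀ ℕ} :
    m ∈ Finset.Iic (unif σ N) ↔ ∀ s, m s ≤ N := by
  simp [Finset.mem_Iic, Finsupp.le_def, unif_apply]

lemma exists_single_of_tdeg_one {α : Type*} [DecidableEq α] {m : α →₀ ℕ}
    (h : tdeg m = 1) : ∃ v, m = Finsupp.single v 1 := by
  have hne : m ≠ 0 := by intro h0; rw [h0] at h; simp [tdeg] at h
  obtain ⟨s, hs⟩ := Finsupp.support_nonempty_iff.2 hne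
  have hms : m s ≠ 0 := Finsupp.mem_support_iff.1 hs
  have hle := apply_le_tdeg m s
  refine ⟨s, ?_⟩
  ext t
  rcases eq_or_ne t s with rfl | hts
  · simp; omega
  · simp only [Finsupp.single_apply, if_neg (Ne.symm hts)]
    by_contra hmt
    have ht : t ∈ m.support := Finsupp.mem_support_iff.2 hmt
    have h3 : m t ≤ ∑ a ∈ m.support.erase s, m a :=
      Finset.single_le_sum (f := fun a => m a) (fun _ _ => Nat.zero_le _)
        (Finset.mem_erase.2 ⟨hts, ht⟩)
    have h2 := Finset.add_sum_erase m.support (fun a => m a) hs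
    change m s + ∑ a ∈ m.support.erase s, m a = ∑ x ∈ m.support, m x at h2
    have h4 : tdeg m = ∑ x ∈ m.support, m x := rfl
    omega

lemma peel_single {α : Type*} [DecidableEq α] {m : α →₀ ℕ} {s : α} (hs : m s ≠ 0) :
    m = (m - Finsupp.single s 1) + Finsupp.single s 1 := by
  ext t
  rcases eq_or_ne t s with rfl | hts
  · simp only [Finsupp.coe_add, Pi.add_apply, Finsupp.tsub_apply, Finsupp.single_eq_same]
    omega
  · simp [Finsupp.tsub_apply, Finsupp.single_apply, Ne.symm hts]

lemma prod_pow_peel (a : σ → MvPowerSeries τ ℂ) (m : σ →₀ ℕ) (s : σ) (hs : m s ≠ 0) :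
    ∏ t : σ, a t ^ m t = a s * ∏ t : σ, a t ^ ((m - Finsupp.single s 1) : σ →₀ ℕ) t := by
  set m' : σ →₀ ℕ := m - Finsupp.single s 1 with hm'
  have hms : m s = m' s + 1 := by
    simp only [hm', Finsupp.tsub_apply, Finsupp.single_eq_same]
    omega
  have hmt : ∀ t, t ≠ s → m t = m' t := by
    intro t ht
    simp [hm', Finsupp.tsub_apply, Finsupp.single_apply, Ne.symm ht]
  have hE : ∏ t ∈ Finset.univ.erase s, a t ^ m t
      = ∏ t ∈ Finset.univ.erase s, a t ^ m' t :=
    Finset.prod_congr rfl fun t ht => by rw [hmt t (Finset.mem_erase.1 ht).1]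
  rw [← Finset.mul_prod_erase Finset.univ _ (Finset.mem_univ s),
      ← Finset.mul_prod_erase Finset.univ (fun t => a t ^ m' t) (Finset.mem_univ s),
      hms, pow_succ, hE]
  ring

lemma prod_pow_single (a : σ → MvPowerSeries τ ℂ) (v : σ) :
    ∏ t : σ, a t ^ (Finsupp.single v 1) t = a v := by
  rw [Finset.prod_eq_single v]
  · simp
  · intro t _ ht; simp [Finsupp.single_apply, Ne.symm ht]
  · intro h; exact absurd (Finset.mem_univ v) h

/-- Order lemma. -/
lemma coeff_prodpow_zero {a : σ → MvPowerSeries τ ℂ}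
    (ha : ∀ s, MvPowerSeries.constantCoeff (σ := τ) (R := ℂ) (a s) = 0) :
    ∀ (K : ℕ) (m : σ →₀ ℕ), tdeg m = K → ∀ e : τ →₀ ℕ, tdeg e < K →
      MvPowerSeries.coeff (R := ℂ) e (∏ s : σ, a s ^ m s) = 0 := by
  intro K
  induction K with
  | zero => intro m _ e he; omega
  | succ K ih =>
    intro m hm e he
    have hne : m ≠ 0 := by
      intro h0; rw [h0] at hm; simp [tdeg] at hm
    obtain ⟨s, hs⟩ := Finsupp.support_nonempty_iff.2 hne
    have hms : m s ≠ 0 := Finsupp.mem_support_iff.1 hs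
    rw [prod_pow_peel a m s hms, MvPowerSeries.coeff_mul]
    apply Finset.sum_eq_zero
    rintro ⟨e1, e2⟩ hmem
    have hsum : e1 + e2 = e := Finset.HasAntidiagonal.mem_antidiagonal.1 hmem
    rcases eq_or_ne e1 0 with rfl | h1
    · rw [MvPowerSeries.coeff_zero_eq_constantCoeff, ha s, zero_mul]
    · have htd : tdeg e1 + tdeg e2 = tdeg e := by rw [← tdeg_add, hsum]
      have h1' : tdeg e1 ≠ 0 := fun h => h1 (tdeg_eq_zero_iff.1 h)
      have hm2 : tdeg (m - Finsupp.single s 1) = K := by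
        have hp := peel_single hms
        have h2 : tdeg m = tdeg ((m - Finsupp.single s 1) : σ →₀ ℕ) + 1 := by
          conv_lhs => rw [hp]
          rw [tdeg_add, tdeg_single]
        omega
      rw [ih _ hm2 e2 (by omega), mul_zero]

end API
section API2

open MvPowerSeries

variable {σ τ υ : Type*} [Fintype σ] [DecidableEq σ] [DecidableEq τ]

/-- partial substitution sums -/
noncomputable def S0 (a : σ → MvPowerSeries τ ℂ) (f : MvPowerSeries σ ℂ) (N : ℕ) :
    MvPowerSeries τ ℂ :=
  ∑ m ∈ Finset.Iic (unif σ N), MvPowerSeries.coeff (R := ℂ) m f • ∏ s : σ, a s ^ m s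

lemma fsubst_coeff_def (a : σ → MvPowerSeries τ ℂ) (f : MvPowerSeries σ ℂ)
    (e : τ →₀ ℕ) :
    MvPowerSeries.coeff (R := ℂ) e (fsubst a f) = MvPowerSeries.coeff (R := ℂ) e (S0 a f (tdeg e)) :=
  rfl

lemma coeff_S0_subset {a : σ → MvPowerSeries τ ℂ}
    (ha : ∀ s, MvPowerSeries.constantCoeff (σ := τ) (R := ℂ) (a s) = 0)
    (f : MvPowerSeries σ ℂ) {e : τ →₀ ℕ} {N N' : ℕ}
    (h : tdeg e ≤ N) (h' : N ≤ N') :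
    MvPowerSeries.coeff (R := ℂ) e (S0 a f N) = MvPowerSeries.coeff (R := ℂ) e (S0 a f N') := by
  unfold S0
  rw [map_sum, map_sum]
  apply Finset.sum_subset
  · intro m hm
    rw [mem_Iic_unif] at hm ⊢
    intro s; exact le_trans (hm s) h'
  · intro m _ hm
    rw [mem_Iic_unif] at hm
    push_neg at hm
    obtain ⟨s, hs⟩ := hm
    have h2 : tdeg e < tdeg m := lt_of_le_of_lt h (lt_of_lt_of_le hs (apply_le_tdeg m s))
    rw [LinearMap.map_smul, coeff_prodpow_zero ha (tdeg m) m rfl e h2, smul_zero]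

lemma coeff_fsubst_S0 {a : σ → MvPowerSeries τ ℂ}
    (ha : ∀ s, MvPowerSeries.constantCoeff (σ := τ) (R := ℂ) (a s) = 0)
    (f : MvPowerSeries σ ℂ) {e : τ →₀ ℕ} {N : ℕ} (hN : tdeg e ≤ N) :
    MvPowerSeries.coeff (R := ℂ) e (fsubst a f) = MvPowerSeries.coeff (R := ℂ) e (S0 a f N) := by
  rw [fsubst_coeff_def]
  exact coeff_S0_subset ha f (le_refl _) hN

/-- the workhorse coefficient formula -/
lemma coeff_fsubst_sum {a : σ → MvPowerSeries τ ℂ}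
    (ha : ∀ s, MvPowerSeries.constantCoeff (σ := τ) (R := ℂ) (a s) = 0)
    (f : MvPowerSeries σ ℂ) {e : τ →₀ ℕ} {N : ℕ} (hN : tdeg e ≤ N) :
    MvPowerSeries.coeff (R := ℂ) e (fsubst a f) =
      ∑ m ∈ Finset.Iic (unif σ N),
        MvPowerSeries.coeff (R := ℂ) m f * MvPowerSeries.coeff (R := ℂ) e (∏ s : σ, a s ^ m s) := by
  rw [coeff_fsubst_S0 ha f hN]
  unfold S0
  rw [map_sum]
  exact Finset.sum_congr rfl fun m _ => by rw [LinearMap.map_smul, smul_eq_mul]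

/-- truncation polynomial -/
noncomputable def truncD (N : ℕ) (f : MvPowerSeries σ ℂ) : MvPolynomial σ ℂ :=
  ∑ m ∈ Finset.Iic (unif σ N), MvPolynomial.monomial m (MvPowerSeries.coeff (R := ℂ) m f)

lemma coeff_truncD_of_le {N : ℕ} {m : σ →₀ ℕ} (h : ∀ s, m s ≤ N)
    (f : MvPowerSeries σ ℂ) :
    MvPolynomial.coeff m (truncD N f) = MvPowerSeries.coeff (R := ℂ) m f := by
  unfold truncD
  rw [MvPolynomial.coeff_sum]
  rw [Finset.sum_eq_single m]
  · rw [MvPolynomial.coeff_monomial, if_pos rfl]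
  · intro m' _ hm'
    rw [MvPolynomial.coeff_monomial, if_neg hm']
  · intro hm
    exact absurd (mem_Iic_unif.2 h) hm

lemma S0_eq_eval₂ (a : σ → MvPowerSeries τ ℂ) (f : MvPowerSeries σ ℂ) (N : ℕ) :
    S0 a f N = MvPolynomial.eval₂ (MvPowerSeries.C (σ := τ) (R := ℂ)) a (truncD N f) := by
  unfold S0 truncD
  rw [← MvPolynomial.coe_eval₂Hom, map_sum]
  apply Finset.sum_congr rfl
  intro m _
  rw [MvPolynomial.coe_eval₂Hom, MvPolynomial.eval₂_monomial, Finsupp.prod_pow,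
    ← MvPowerSeries.smul_eq_C_mul]

lemma coeff_eval₂_support_high {a : σ → MvPowerSeries τ ℂ}
    (ha : ∀ s, MvPowerSeries.constantCoeff (σ := τ) (R := ℂ) (a s) = 0) {P : MvPolynomial σ ℂ}
    {N : ℕ} (hP : ∀ m ∈ P.support, N < tdeg m) {e : τ →₀ ℕ} (he : tdeg e ≤ N) :
    MvPowerSeries.coeff (R := ℂ) e (MvPolynomial.eval₂ (MvPowerSeries.C (σ := τ) (R := ℂ)) a P) = 0 := by
  conv_lhs => rw [P.as_sum]
  rw [← MvPolynomial.coe_eval₂Hom, map_sum, map_sum]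
  apply Finset.sum_eq_zero
  intro m hm
  rw [MvPolynomial.coe_eval₂Hom, MvPolynomial.eval₂_monomial, Finsupp.prod_pow,
    ← MvPowerSeries.smul_eq_C_mul, LinearMap.map_smul,
    coeff_prodpow_zero ha (tdeg m) m rfl e (lt_of_le_of_lt he (hP m hm)), smul_zero]

lemma coeff_eval₂_agree {a : σ → MvPowerSeries τ ℂ}
    (ha : ∀ s, MvPowerSeries.constantCoeff (σ := τ) (R := ℂ) (a s) = 0) {P P' : MvPolynomial σ ℂ}
    {N : ℕ} (h : ∀ m : σ →₀ ℕ, tdeg m ≤ N → MvPolynomial.coeff m P = MvPolynomial.coeff m P')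
    {e : τ →₀ ℕ} (he : tdeg e ≤ N) :
    MvPowerSeries.coeff (R := ℂ) e (MvPolynomial.eval₂ (MvPowerSeries.C (σ := τ) (R := ℂ)) a P) =
    MvPowerSeries.coeff (R := ℂ) e (MvPolynomial.eval₂ (MvPowerSeries.C (σ := τ) (R := ℂ)) a P') := by
  have h0 : MvPowerSeries.coeff (R := ℂ) e
      (MvPolynomial.eval₂ (MvPowerSeries.C (σ := τ) (R := ℂ)) a (P - P')) = 0 := by
    apply coeff_eval₂_support_high ha _ he
    intro m hm
    by_contra hN
    push_neg at hN
    have := MvPolynomial.mem_support_iff.1 hm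
    rw [MvPolynomial.coeff_sub, h m hN, sub_self] at this
    exact this rfl
  rw [← MvPolynomial.coe_eval₂Hom, map_sub, map_sub] at h0
  rw [← MvPolynomial.coe_eval₂Hom]
  exact sub_eq_zero.1 h0

lemma coeff_fsubst_eval₂ {a : σ → MvPowerSeries τ ℂ}
    (ha : ∀ s, MvPowerSeries.constantCoeff (σ := τ) (R := ℂ) (a s) = 0)
    (f : MvPowerSeries σ ℂ) {e : τ →₀ ℕ} {N : ℕ} (hN : tdeg e ≤ N) :
    MvPowerSeries.coeff (R := ℂ) e (fsubst a f) =
    MvPowerSeries.coeff (R := ℂ) e (MvPolynomial.eval₂ (MvPowerSeries.C (σ := τ) (R := ℂ)) a (truncD N f)) := by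
  rw [coeff_fsubst_S0 ha f hN, S0_eq_eval₂]

lemma fsubst_add (a : σ → MvPowerSeries τ ℂ) (f g : MvPowerSeries σ ℂ) :
    fsubst a (f + g) = fsubst a f + fsubst a g := by
  apply MvPowerSeries.ext; intro e
  rw [map_add, fsubst_coeff_def, fsubst_coeff_def, fsubst_coeff_def, ← map_add]
  congr 1
  unfold S0
  rw [← Finset.sum_add_distrib]
  exact Finset.sum_congr rfl fun m _ => by rw [map_add, add_smul]

lemma fsubst_zero (a : σ → MvPowerSeries τ ℂ) : fsubst a 0 = 0 := by
  apply MvPowerSeries.ext; intro e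
  rw [fsubst_coeff_def]
  unfold S0
  rw [map_sum]
  rw [Finset.sum_eq_zero, map_zero]
  intro m _
  rw [map_zero, zero_smul, map_zero]

lemma fsubst_smul (a : σ → MvPowerSeries τ ℂ) (c : ℂ) (f : MvPowerSeries σ ℂ) :
    fsubst a (c • f) = c • fsubst a f := by
  apply MvPowerSeries.ext; intro e
  rw [LinearMap.map_smul, fsubst_coeff_def, fsubst_coeff_def, ← LinearMap.map_smul]
  congr 1
  unfold S0
  rw [Finset.smul_sum]
  exact Finset.sum_congr rfl fun m _ => by rw [LinearMap.map_smul, smul_assoc]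

lemma fsubst_one (a : σ → MvPowerSeries τ ℂ) : fsubst a 1 = 1 := by
  apply MvPowerSeries.ext; intro e
  rw [fsubst_coeff_def]
  unfold S0
  rw [map_sum, Finset.sum_eq_single (0 : σ →₀ ℕ)]
  · have : ∏ s : σ, a s ^ (0 : σ →₀ ℕ) s = 1 := by
      apply Finset.prod_eq_one; intro s _; simp
    rw [this, MvPowerSeries.coeff_zero_eq_constantCoeff, map_one, one_smul]
  · intro m _ hm
    rw [MvPowerSeries.coeff_one, if_neg hm, zero_smul, map_zero]
  · intro h
    exact absurd (mem_Iic_unif.2 fun s => Nat.zero_le _) h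

lemma fsubst_mul {a : σ → MvPowerSeries τ ℂ}
    (ha : ∀ s, MvPowerSeries.constantCoeff (σ := τ) (R := ℂ) (a s) = 0)
    (f g : MvPowerSeries σ ℂ) :
    fsubst a (f * g) = fsubst a f * fsubst a g := by
  apply MvPowerSeries.ext; intro e
  set N := tdeg e with hNdef
  have htr : ∀ m : σ →₀ ℕ, tdeg m ≤ N →
      MvPolynomial.coeff m (truncD N (f * g)) =
      MvPolynomial.coeff m (truncD N f * truncD N g) := by
    intro m hm
    have hms : ∀ s, m s ≤ N := fun s => le_trans (apply_le_tdeg m s) hm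
    rw [coeff_truncD_of_le hms, MvPolynomial.coeff_mul, MvPowerSeries.coeff_mul]
    apply Finset.sum_congr rfl
    rintro ⟨p, q⟩ hpq
    have hsum : p + q = m := Finset.HasAntidiagonal.mem_antidiagonal.1 hpq
    have happ : ∀ s, p s + q s = m s := by
      intro s
      rw [← hsum]
      simp
    have hp : ∀ s, p s ≤ N := fun s => le_trans (by have := happ s; omega) (hms s)
    have hq : ∀ s, q s ≤ N := fun s => le_trans (by have := happ s; omega) (hms s)
    rw [coeff_truncD_of_le hp f, coeff_truncD_of_le hq g]
  rw [coeff_fsubst_eval₂ ha (f * g) hNdef.ge,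
      coeff_eval₂_agree ha htr hNdef.ge,
      ← MvPolynomial.coe_eval₂Hom, map_mul, MvPolynomial.coe_eval₂Hom,
      MvPowerSeries.coeff_mul, MvPowerSeries.coeff_mul]
  apply Finset.sum_congr rfl
  rintro ⟨p, q⟩ hpq
  have hsum : p + q = e := Finset.HasAntidiagonal.mem_antidiagonal.1 hpq
  have hp : tdeg p ≤ N := by rw [hNdef, ← hsum, tdeg_add]; omega
  have hq : tdeg q ≤ N := by rw [hNdef, ← hsum, tdeg_add]; omega
  rw [← coeff_fsubst_eval₂ ha f hp, ← coeff_fsubst_eval₂ ha g hq]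

/-- `fsubst` as a ring homomorphism. -/
noncomputable def fsubstHom {a : σ → MvPowerSeries τ ℂ}
    (ha : ∀ s, MvPowerSeries.constantCoeff (σ := τ) (R := ℂ) (a s) = 0) :
    MvPowerSeries σ ℂ →+* MvPowerSeries τ ℂ where
  toFun := fsubst a
  map_one' := fsubst_one a
  map_mul' := fsubst_mul ha
  map_zero' := fsubst_zero a
  map_add' := fsubst_add a

lemma fsubstHom_apply {a : σ → MvPowerSeries τ ℂ}
    (ha : ∀ s, MvPowerSeries.constantCoeff (σ := τ) (R := ℂ) (a s) = 0) (f : MvPowerSeries σ ℂ) :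
    fsubstHom ha f = fsubst a f := rfl

lemma fsubst_X {a : σ → MvPowerSeries τ ℂ}
    (ha : ∀ s, MvPowerSeries.constantCoeff (σ := τ) (R := ℂ) (a s) = 0) (s : σ) :
    fsubst a (MvPowerSeries.X s) = a s := by
  apply MvPowerSeries.ext; intro e
  rw [coeff_fsubst_sum ha _ (Nat.le_succ_of_le (le_refl (tdeg e)))]
  rw [Finset.sum_eq_single (Finsupp.single s 1)]
  · rw [MvPowerSeries.coeff_X, if_pos rfl, prod_pow_single, one_mul]
  · intro m _ hm
    rw [MvPowerSeries.coeff_X, if_neg hm, zero_mul]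
  · intro hmem
    refine absurd (mem_Iic_unif.2 fun t => ?_) hmem
    have : (Finsupp.single s 1) t ≤ 1 := by
      simp [Finsupp.single_apply]
      split <;> omega
    omega

lemma coeff_prod_X_pow (m e : σ →₀ ℕ) :
    MvPowerSeries.coeff (R := ℂ) e (∏ s : σ, (MvPowerSeries.X s : MvPowerSeries σ ℂ) ^ m s)
      = if m = e then 1 else 0 := by
  have h1 : (∏ s : σ, (MvPolynomial.X s : MvPolynomial σ ℂ) ^ m s)
      = MvPolynomial.monomial m 1 := by
    rw [← MvPolynomial.prod_X_pow_eq_monomial]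
    symm
    apply Finset.prod_subset (Finset.subset_univ _)
    intro x _ hx
    rw [Finsupp.notMem_support_iff.1 hx, pow_zero]
  have h2 : ((MvPolynomial.monomial m (1:ℂ) : MvPolynomial σ ℂ) : MvPowerSeries σ ℂ)
      = ∏ s : σ, (MvPowerSeries.X s : MvPowerSeries σ ℂ) ^ m s := by
    rw [← h1, ← MvPolynomial.coeToMvPowerSeries.ringHom_apply, map_prod]
    apply Finset.prod_congr rfl
    intro s _
    rw [map_pow, MvPolynomial.coeToMvPowerSeries.ringHom_apply, MvPolynomial.coe_X]
  rw [← h2, MvPolynomial.coeff_coe, MvPolynomial.coeff_monomial]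

lemma fsubst_id (f : MvPowerSeries σ ℂ) :
    fsubst (fun s => (MvPowerSeries.X s : MvPowerSeries σ ℂ)) f = f := by
  apply MvPowerSeries.ext; intro e
  rw [coeff_fsubst_sum (fun s => MvPowerSeries.constantCoeff_X s) f (le_refl (tdeg e))]
  rw [Finset.sum_eq_single e]
  · rw [coeff_prod_X_pow, if_pos rfl, mul_one]
  · intro m _ hm
    rw [coeff_prod_X_pow, if_neg hm, mul_zero]
  · intro hmem
    exact absurd (mem_Iic_unif.2 fun s => apply_le_tdeg e s) hmem

lemma constantCoeff_fsubst {a : σ → MvPowerSeries τ ℂ}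
    (ha : ∀ s, MvPowerSeries.constantCoeff (σ := τ) (R := ℂ) (a s) = 0) (f : MvPowerSeries σ ℂ) :
    MvPowerSeries.constantCoeff (σ := τ) (R := ℂ) (fsubst a f) =
      MvPowerSeries.constantCoeff (σ := σ) (R := ℂ) f := by
  rw [← MvPowerSeries.coeff_zero_eq_constantCoeff, ← MvPowerSeries.coeff_zero_eq_constantCoeff]
  rw [coeff_fsubst_sum ha f (le_of_eq tdeg_zero)]
  rw [Finset.sum_eq_single (0 : σ →₀ ℕ)]
  · have : ∏ s : σ, a s ^ (0 : σ →₀ ℕ) s = 1 := by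
      apply Finset.prod_eq_one; intro s _; simp
    rw [this, MvPowerSeries.coeff_one, if_pos rfl, mul_one]
  · intro m hmem hm
    rw [mem_Iic_unif] at hmem
    have : m = 0 := by
      ext s
      exact Nat.le_zero.1 (hmem s)
    exact absurd this hm
  · intro h
    exact absurd (mem_Iic_unif.2 fun s => Nat.zero_le _) h

lemma fsubst_prod_pow {α : Type*} [Fintype α] {b : τ → MvPowerSeries υ ℂ} [DecidableEq υ]
    [Fintype τ]
    (hb : ∀ t, MvPowerSeries.constantCoeff (σ := υ) (R := ℂ) (b t) = 0)
    (g : α → MvPowerSeries τ ℂ) (m : α →₀ ℕ) :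
    fsubst b (∏ s : α, g s ^ m s) = ∏ s : α, (fsubst b (g s)) ^ m s := by
  rw [← fsubstHom_apply hb, map_prod]
  exact Finset.prod_congr rfl fun s _ => by rw [map_pow, fsubstHom_apply]

lemma fsubst_fsubst {υ : Type*} [DecidableEq υ] [Fintype τ]
    {a : σ → MvPowerSeries τ ℂ} {b : τ → MvPowerSeries υ ℂ}
    (ha : ∀ s, MvPowerSeries.constantCoeff (σ := τ) (R := ℂ) (a s) = 0)
    (hb : ∀ t, MvPowerSeries.constantCoeff (σ := υ) (R := ℂ) (b t) = 0)
    (f : MvPowerSeries σ ℂ) :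
    fsubst b (fsubst a f) = fsubst (fun s => fsubst b (a s)) f := by
  have hba : ∀ s, MvPowerSeries.constantCoeff (σ := υ) (R := ℂ) (fsubst b (a s)) = 0 := fun s => by
    rw [constantCoeff_fsubst hb, ha s]
  apply MvPowerSeries.ext; intro e
  set N := tdeg e with hNdef
  set M := N * Fintype.card τ + N with hMdef
  have hM : ∀ m' ∈ Finset.Iic (unif τ N), tdeg m' ≤ M := by
    intro m' hm'
    rw [tdeg_eq_sum_fintype]
    have h1 : ∑ t : τ, m' t ≤ ∑ _t : τ, N :=
      Finset.sum_le_sum (fun t _ => (mem_Iic_unif.1 hm') t)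
    have h2 : ∑ _t : τ, N = Fintype.card τ * N := by
      rw [Finset.sum_const, smul_eq_mul, Finset.card_univ]
    have h3 : Fintype.card τ * N ≤ M := by
      rw [hMdef, Nat.mul_comm]
      omega
    omega
  have hNM : tdeg e ≤ M := by omega
  rw [coeff_fsubst_sum hb _ (le_refl N)]
  have hstep : ∀ m' ∈ Finset.Iic (unif τ N),
      MvPowerSeries.coeff (R := ℂ) m' (fsubst a f) * MvPowerSeries.coeff (R := ℂ) e (∏ t : τ, b t ^ m' t)
      = MvPowerSeries.coeff (R := ℂ) m' (S0 a f M) * MvPowerSeries.coeff (R := ℂ) e (∏ t : τ, b t ^ m' t) :=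
    fun m' hm' => by rw [coeff_fsubst_S0 ha f (hM m' hm')]
  rw [Finset.sum_congr rfl hstep, ← coeff_fsubst_sum hb (S0 a f M) (le_refl N)]
  have hS : fsubst b (S0 a f M) = S0 (fun s => fsubst b (a s)) f M := by
    unfold S0
    rw [← fsubstHom_apply hb, map_sum]
    apply Finset.sum_congr rfl
    intro m _
    rw [fsubstHom_apply, fsubst_smul, fsubst_prod_pow hb]
  rw [hS, ← coeff_fsubst_S0 hba f hNM]

end API2

section ConjAPI

open MvPowerSeries

variable {α : Type*}

lemma coeff_conjS (f : MvPowerSeries α ℂ) (e : α →₀ ℕ) :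
    MvPowerSeries.coeff (R := ℂ) e (conjS f) = starRingEnd ℂ (MvPowerSeries.coeff (R := ℂ) e f) :=
  rfl

lemma conjS_eq_map (f : MvPowerSeries α ℂ) :
    conjS f = MvPowerSeries.map (σ := α) (starRingEnd ℂ) f := by
  apply MvPowerSeries.ext; intro e
  rw [MvPowerSeries.coeff_map, coeff_conjS]

lemma conjS_conjS (f : MvPowerSeries α ℂ) : conjS (conjS f) = f := by
  apply MvPowerSeries.ext; intro e
  rw [coeff_conjS, coeff_conjS, Complex.conj_conj]

lemma conjS_X [DecidableEq α] (s : α) :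
    conjS (MvPowerSeries.X s : MvPowerSeries α ℂ) = MvPowerSeries.X s := by
  apply MvPowerSeries.ext; intro e
  rw [coeff_conjS, MvPowerSeries.coeff_X]
  split <;> simp

lemma constantCoeff_conjS (f : MvPowerSeries α ℂ) :
    MvPowerSeries.constantCoeff (σ := α) (R := ℂ) (conjS f) =
      starRingEnd ℂ (MvPowerSeries.constantCoeff (σ := α) (R := ℂ) f) := by
  rw [← MvPowerSeries.coeff_zero_eq_constantCoeff, coeff_conjS]

lemma conjS_fsubst {σ τ : Type*} [Fintype σ] [DecidableEq σ] [DecidableEq τ]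
    (a : σ → MvPowerSeries τ ℂ) (f : MvPowerSeries σ ℂ) :
    conjS (fsubst a f) = fsubst (fun s => conjS (a s)) (conjS f) := by
  have hprod : ∀ m : σ →₀ ℕ,
      conjS (∏ s : σ, a s ^ m s) = ∏ s : σ, conjS (a s) ^ m s := by
    intro m
    rw [conjS_eq_map, map_prod]
    exact Finset.prod_congr rfl fun s _ => by rw [map_pow, conjS_eq_map]
  apply MvPowerSeries.ext; intro e
  rw [coeff_conjS, fsubst_coeff_def, fsubst_coeff_def]
  unfold S0
  rw [map_sum, map_sum, map_sum]
  apply Finset.sum_congr rfl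
  intro m _
  rw [LinearMap.map_smul, LinearMap.map_smul, smul_eq_mul, smul_eq_mul, map_mul]
  refine congrArg₂ (· * ·) rfl ?_
  rw [← coeff_conjS, hprod m]

end ConjAPI
section IFT

open MvPowerSeries

lemma coeff_prodpow_agree {σ τ : Type*} [Fintype σ] [DecidableEq σ] [DecidableEq τ]
    {E : ℕ} {a a' : σ → MvPowerSeries τ ℂ}
    (ha : ∀ s, MvPowerSeries.constantCoeff (σ := τ) (R := ℂ) (a s) = 0)
    (ha' : ∀ s, MvPowerSeries.constantCoeff (σ := τ) (R := ℂ) (a' s) = 0)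
    (hagree : ∀ s (e' : τ →₀ ℕ), tdeg e' < E →
      MvPowerSeries.coeff (R := ℂ) e' (a s) = MvPowerSeries.coeff (R := ℂ) e' (a' s)) :
    ∀ (K : ℕ) (m : σ →₀ ℕ), tdeg m = K → 1 ≤ K → ∀ e : τ →₀ ℕ, tdeg e < E + K - 1 →
      MvPowerSeries.coeff (R := ℂ) e (∏ s : σ, a s ^ m s) =
      MvPowerSeries.coeff (R := ℂ) e (∏ s : σ, a' s ^ m s) := by
  intro K
  induction K with
  | zero => intro m _ h1; omega
  | succ K ih =>
    intro m hm _ e he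
    rcases Nat.eq_zero_or_pos K with hK0 | hKpos
    · subst hK0
      obtain ⟨v, rfl⟩ := exists_single_of_tdeg_one hm
      rw [prod_pow_single, prod_pow_single]
      exact hagree v e (by omega)
    · have hne : m ≠ 0 := by
        intro h0; rw [h0] at hm; simp [tdeg] at hm
      obtain ⟨s, hs⟩ := Finsupp.support_nonempty_iff.2 hne
      have hms : m s ≠ 0 := Finsupp.mem_support_iff.1 hs
      have hm2 : tdeg ((m - Finsupp.single s 1 : (σ →₀ ℕ))) = K := by
        have hp := peel_single hms
        have h2 : tdeg m = tdeg ((m - Finsupp.single s 1) : σ →₀ ℕ) + 1 := by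
          conv_lhs => rw [hp]
          rw [tdeg_add, tdeg_single]
        omega
      rw [prod_pow_peel a m s hms, prod_pow_peel a' m s hms,
          MvPowerSeries.coeff_mul, MvPowerSeries.coeff_mul]
      apply Finset.sum_congr rfl
      rintro ⟨e1, e2⟩ hmem
      have hsum : e1 + e2 = e := Finset.HasAntidiagonal.mem_antidiagonal.1 hmem
      have htd : tdeg e1 + tdeg e2 = tdeg e := by rw [← tdeg_add, hsum]
      rcases eq_or_ne e1 0 with rfl | h1
      · rw [MvPowerSeries.coeff_zero_eq_constantCoeff, ha s, ha' s, zero_mul, zero_mul]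
      · have h1' : tdeg e1 ≠ 0 := fun hh => h1 (tdeg_eq_zero_iff.1 hh)
        by_cases h1E : tdeg e1 < E
        · rw [hagree s e1 h1E, ih _ hm2 hKpos e2 (by omega)]
        · rw [coeff_prodpow_zero ha K _ hm2 e2 (by omega),
            coeff_prodpow_zero ha' K _ hm2 e2 (by omega), mul_zero, mul_zero]

variable {P : Type*} [Fintype P] [DecidableEq P] {n : ℕ}

lemma fsubst_coeff_agree {E : ℕ}
    (r : MvPowerSeries (P ⊕ Fin n) ℂ)
    (hr0 : MvPowerSeries.constantCoeff (σ := _) (R := ℂ) r = 0)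
    (hrlin : ∀ k : Fin n, MvPowerSeries.coeff (R := ℂ) (Finsupp.single (Sum.inr k) 1) r = 0)
    (u u' : (P ⊕ Fin n) → MvPowerSeries P ℂ)
    (hu0 : ∀ v, MvPowerSeries.constantCoeff (σ := _) (R := ℂ) (u v) = 0)
    (hu'0 : ∀ v, MvPowerSeries.constantCoeff (σ := _) (R := ℂ) (u' v) = 0)
    (hl : ∀ p, u (Sum.inl p) = MvPowerSeries.X p)
    (hl' : ∀ p, u' (Sum.inl p) = MvPowerSeries.X p)
    (hagree : ∀ v (e' : P →₀ ℕ), tdeg e' < E →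
      MvPowerSeries.coeff (R := ℂ) e' (u v) = MvPowerSeries.coeff (R := ℂ) e' (u' v))
    {e : P →₀ ℕ} (he : tdeg e ≤ E) :
    MvPowerSeries.coeff (R := ℂ) e (fsubst u r) = MvPowerSeries.coeff (R := ℂ) e (fsubst u' r) := by
  rw [coeff_fsubst_sum hu0 r (le_refl _), coeff_fsubst_sum hu'0 r (le_refl _)]
  apply Finset.sum_congr rfl
  intro m _
  rcases Nat.lt_or_ge (tdeg m) 2 with h2 | h2
  · rcases Nat.lt_or_ge (tdeg m) 1 with h1 | h1
    · have hm0 : m = 0 := tdeg_eq_zero_iff.1 (by omega)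
      rw [hm0, MvPowerSeries.coeff_zero_eq_constantCoeff, hr0, zero_mul, zero_mul]
    · have h1' : tdeg m = 1 := by omega
      obtain ⟨v, rfl⟩ := exists_single_of_tdeg_one h1'
      rw [prod_pow_single, prod_pow_single]
      cases v with
      | inl p => rw [hl, hl']
      | inr k => rw [hrlin k, zero_mul, zero_mul]
  · refine congrArg₂ (· * ·) rfl ?_
    exact coeff_prodpow_agree hu0 hu'0 hagree (tdeg m) m rfl (by omega) e (by omega)

/-- Picard-type iteration for the formal implicit function theorem. -/
noncomputable def itSeq (r : Fin n → MvPowerSeries (P ⊕ Fin n) ℂ)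
    (h : Fin n → MvPowerSeries P ℂ) : ℕ → Fin n → MvPowerSeries P ℂ
  | 0 => fun _ => 0
  | (k+1) => fun i =>
      h i - fsubst (Sum.elim (fun p => MvPowerSeries.X p) (itSeq r h k)) (r i)

lemma fsubst_sum {σ τ : Type*} [Fintype σ] [DecidableEq σ] [DecidableEq τ]
    (a : σ → MvPowerSeries τ ℂ) {ι : Type*} (s : Finset ι)
    (F : ι → MvPowerSeries σ ℂ) :
    fsubst a (∑ i ∈ s, F i) = ∑ i ∈ s, fsubst a (F i) :=
  map_sum (AddMonoidHom.mk' (fsubst a) (fsubst_add a)) F s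

lemma fsubst_sub {σ τ : Type*} [Fintype σ] [DecidableEq σ] [DecidableEq τ]
    (a : σ → MvPowerSeries τ ℂ) (f g : MvPowerSeries σ ℂ) :
    fsubst a (f - g) = fsubst a f - fsubst a g :=
  map_sub (AddMonoidHom.mk' (fsubst a) (fsubst_add a)) f g

theorem formal_IFT_normalized
    (g : Fin n → MvPowerSeries (P ⊕ Fin n) ℂ)
    (hg0 : ∀ i, MvPowerSeries.constantCoeff (σ := _) (R := ℂ) (g i) = 0)
    (hA : ∀ i k, MvPowerSeries.coeff (R := ℂ) (Finsupp.single (Sum.inr k) 1) (g i)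
      = if i = k then 1 else 0)
    (h : Fin n → MvPowerSeries P ℂ)
    (hh0 : ∀ i, MvPowerSeries.constantCoeff (σ := _) (R := ℂ) (h i) = 0) :
    ∃ π : Fin n → MvPowerSeries P ℂ,
      (∀ i, MvPowerSeries.constantCoeff (σ := _) (R := ℂ) (π i) = 0) ∧
      ∀ i, fsubst (Sum.elim (fun p => MvPowerSeries.X p) π) (g i) = h i := by
  classical
  set r : Fin n → MvPowerSeries (P ⊕ Fin n) ℂ :=
    fun i => g i - MvPowerSeries.X (Sum.inr i) with hrdef
  have hr0 : ∀ i, MvPowerSeries.constantCoeff (σ := _) (R := ℂ) (r i) = 0 := by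
    intro i
    rw [hrdef]
    simp [map_sub, hg0, MvPowerSeries.constantCoeff_X]
  have hrlin : ∀ i k, MvPowerSeries.coeff (R := ℂ) (Finsupp.single (Sum.inr k) 1) (r i) = 0 := by
    intro i k
    rw [hrdef]
    simp only [map_sub, hA, MvPowerSeries.coeff_X]
    have hiff : (Finsupp.single (Sum.inr k : P ⊕ Fin n) 1
        = Finsupp.single (Sum.inr i : P ⊕ Fin n) 1) ↔ i = k := by
      rw [Finsupp.single_left_inj one_ne_zero]
      constructor
      · intro hh; exact (Sum.inr_injective hh).symm
      · rintro rfl; rfl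
    by_cases hik : i = k
    · rw [if_pos hik, if_pos (hiff.2 hik), sub_self]
    · rw [if_neg hik, if_neg (fun hh => hik (hiff.1 hh)), sub_self]
  -- constant term of the iterates
  have hit0 : ∀ k i, MvPowerSeries.constantCoeff (σ := _) (R := ℂ) (itSeq r h k i) = 0 := by
    intro k
    induction k with
    | zero => intro i; simp [itSeq]
    | succ k ih =>
      intro i
      have hu0 : ∀ v, MvPowerSeries.constantCoeff (σ := _) (R := ℂ)
          (Sum.elim (fun p => (MvPowerSeries.X p : MvPowerSeries P ℂ)) (itSeq r h k) v) = 0 := by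
        rintro (p | i') <;> simp [MvPowerSeries.constantCoeff_X, ih]
      show MvPowerSeries.constantCoeff (σ := _) (R := ℂ)
        (h i - fsubst (Sum.elim (fun p => MvPowerSeries.X p) (itSeq r h k)) (r i)) = 0
      rw [map_sub, hh0, constantCoeff_fsubst hu0, hr0, sub_self]
  have huk0 : ∀ k v, MvPowerSeries.constantCoeff (σ := _) (R := ℂ)
      (Sum.elim (fun p => (MvPowerSeries.X p : MvPowerSeries P ℂ)) (itSeq r h k) v) = 0 := by
    rintro k (p | i') <;> simp [MvPowerSeries.constantCoeff_X, hit0]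
  -- stabilization
  have stab : ∀ D k, D ≤ k → ∀ i (e : P →₀ ℕ), tdeg e ≤ D →
      MvPowerSeries.coeff (R := ℂ) e (itSeq r h k i) = MvPowerSeries.coeff (R := ℂ) e (itSeq r h D i) := by
    intro D
    induction D with
    | zero =>
      intro k _ i e he
      have he0 : e = 0 := tdeg_eq_zero_iff.1 (by omega)
      rw [he0, MvPowerSeries.coeff_zero_eq_constantCoeff, hit0, hit0]
    | succ D ih =>
      intro k hk i e he
      obtain ⟨k', rfl⟩ : ∃ k', k = k' + 1 := ⟨k - 1, by omega⟩
      show MvPowerSeries.coeff (R := ℂ) e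
          (h i - fsubst (Sum.elim (fun p => MvPowerSeries.X p) (itSeq r h k')) (r i)) =
        MvPowerSeries.coeff (R := ℂ) e
          (h i - fsubst (Sum.elim (fun p => MvPowerSeries.X p) (itSeq r h D)) (r i))
      rw [map_sub, map_sub]
      congr 1
      apply fsubst_coeff_agree (r i) (hr0 i) (hrlin i) _ _ (huk0 k') (huk0 D)
        (fun p => rfl) (fun p => rfl) _ he
      rintro (p | i') e' he'
      · rfl
      · exact (ih k' (by omega) i' e' (by omega)).trans (ih D (le_refl D) i' e' (by omega)).symm
  -- the limit
  set π : Fin n → MvPowerSeries P ℂ :=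
    fun i => (fun e => MvPowerSeries.coeff (R := ℂ) e (itSeq r h (tdeg e) i)) with hπdef
  have hπcoeff : ∀ i (e : P →₀ ℕ),
      MvPowerSeries.coeff (R := ℂ) e (π i) = MvPowerSeries.coeff (R := ℂ) e (itSeq r h (tdeg e) i) := by
    intro i e; rfl
  have hπagree : ∀ (k : ℕ) i (e : P →₀ ℕ), tdeg e ≤ k →
      MvPowerSeries.coeff (R := ℂ) e (π i) = MvPowerSeries.coeff (R := ℂ) e (itSeq r h k i) := by
    intro k i e he
    rw [hπcoeff]
    exact (stab (tdeg e) k he i e (le_refl _)).symm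
  have hπ0 : ∀ i, MvPowerSeries.constantCoeff (σ := _) (R := ℂ) (π i) = 0 := by
    intro i
    rw [← MvPowerSeries.coeff_zero_eq_constantCoeff, hπagree 0 i 0 (le_of_eq tdeg_zero),
      MvPowerSeries.coeff_zero_eq_constantCoeff, hit0]
  have hu0 : ∀ v, MvPowerSeries.constantCoeff (σ := _) (R := ℂ)
      (Sum.elim (fun p => (MvPowerSeries.X p : MvPowerSeries P ℂ)) π v) = 0 := by
    rintro (p | i') <;> simp [MvPowerSeries.constantCoeff_X, hπ0]
  refine ⟨π, hπ0, ?_⟩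
  intro i
  have hgdecomp : g i = MvPowerSeries.X (Sum.inr i) + r i := by rw [hrdef]; ring
  apply MvPowerSeries.ext; intro e
  rw [hgdecomp, fsubst_add, map_add, fsubst_X hu0]
  have h2 : MvPowerSeries.coeff (R := ℂ) e
      (fsubst (Sum.elim (fun p => MvPowerSeries.X p) π) (r i)) =
      MvPowerSeries.coeff (R := ℂ) e
      (fsubst (Sum.elim (fun p => MvPowerSeries.X p) (itSeq r h (tdeg e))) (r i)) := by
    apply fsubst_coeff_agree (r i) (hr0 i) (hrlin i) _ _ hu0 (huk0 (tdeg e))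
      (fun p => rfl) (fun p => rfl) _ (le_refl _)
    rintro (p | i') e' he'
    · rfl
    · exact hπagree (tdeg e) i' e' (by omega)
  have h1 : MvPowerSeries.coeff (R := ℂ) e (Sum.elim (fun p => MvPowerSeries.X p) π (Sum.inr i)) =
      MvPowerSeries.coeff (R := ℂ) e (h i) - MvPowerSeries.coeff (R := ℂ) e
        (fsubst (Sum.elim (fun p => MvPowerSeries.X p) (itSeq r h (tdeg e))) (r i)) := by
    show MvPowerSeries.coeff (R := ℂ) e (π i) = _
    rw [hπagree (tdeg e + 1) i e (by omega)]
    show MvPowerSeries.coeff (R := ℂ) e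
      (h i - fsubst (Sum.elim (fun p => MvPowerSeries.X p) (itSeq r h (tdeg e))) (r i)) = _
    rw [map_sub]
  rw [h2, h1]
  ring

end IFT
section IFT2

open MvPowerSeries

lemma matrix_resum {α : Type*} {n : ℕ} (A B : Matrix (Fin n) (Fin n) ℂ)
    (hAB : A * B = 1) (F : Fin n → MvPowerSeries α ℂ) (i : Fin n) :
    ∑ k, A i k • (∑ l, B k l • F l) = F i := by
  simp_rw [Finset.smul_sum, smul_smul]
  rw [Finset.sum_comm]
  have hone : ∀ l, ∑ k, (A i k * B k l) • F l = ((A * B) i l) • F l := by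
    intro l
    rw [← Finset.sum_smul, Matrix.mul_apply]
  rw [Finset.sum_congr rfl fun l _ => hone l, hAB]
  simp [Matrix.one_apply]

theorem formal_IFT {P : Type*} [Fintype P] [DecidableEq P] {n : ℕ}
    (g : Fin n → MvPowerSeries (P ⊕ Fin n) ℂ)
    (hg0 : ∀ i, MvPowerSeries.constantCoeff (σ := _) (R := ℂ) (g i) = 0)
    (hdet : (Matrix.of fun i j =>
      MvPowerSeries.coeff (R := ℂ) (Finsupp.single (Sum.inr j) 1) (g i)).det ≠ 0)
    (h : Fin n → MvPowerSeries P ℂ)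
    (hh0 : ∀ i, MvPowerSeries.constantCoeff (σ := _) (R := ℂ) (h i) = 0) :
    ∃ π : Fin n → MvPowerSeries P ℂ,
      (∀ i, MvPowerSeries.constantCoeff (σ := _) (R := ℂ) (π i) = 0) ∧
      ∀ i, fsubst (Sum.elim (fun p => MvPowerSeries.X p) π) (g i) = h i := by
  classical
  set A : Matrix (Fin n) (Fin n) ℂ :=
    Matrix.of fun i j => MvPowerSeries.coeff (R := ℂ) (Finsupp.single (Sum.inr j) 1) (g i) with hAdef
  have hAunit : IsUnit A.det := isUnit_iff_ne_zero.2 hdet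
  set B := A⁻¹ with hBdef
  have hBA : B * A = 1 := Matrix.nonsing_inv_mul A hAunit
  have hAB : A * B = 1 := Matrix.mul_nonsing_inv A hAunit
  set g' : Fin n → MvPowerSeries (P ⊕ Fin n) ℂ := fun i => ∑ k, B i k • g k with hg'def
  set h' : Fin n → MvPowerSeries P ℂ := fun i => ∑ k, B i k • h k with hh'def
  have hg'0 : ∀ i, MvPowerSeries.constantCoeff (σ := _) (R := ℂ) (g' i) = 0 := by
    intro i
    rw [hg'def]
    rw [map_sum]
    apply Finset.sum_eq_zero
    intro k _
    rw [MvPowerSeries.smul_eq_C_mul, map_mul, hg0, mul_zero]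
  have hh'0 : ∀ i, MvPowerSeries.constantCoeff (σ := _) (R := ℂ) (h' i) = 0 := by
    intro i
    rw [hh'def]
    rw [map_sum]
    apply Finset.sum_eq_zero
    intro k _
    rw [MvPowerSeries.smul_eq_C_mul, map_mul, hh0, mul_zero]
  have hg'lin : ∀ i k, MvPowerSeries.coeff (R := ℂ) (Finsupp.single (Sum.inr k) 1) (g' i)
      = if i = k then 1 else 0 := by
    intro i k
    rw [hg'def]
    simp only [map_sum, map_smul, smul_eq_mul]
    have : ∀ j, B i j * MvPowerSeries.coeff (R := ℂ) (Finsupp.single (Sum.inr k) 1) (g j)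
        = B i j * A j k := by intro j; rfl
    rw [Finset.sum_congr rfl fun j _ => this j, ← Matrix.mul_apply, hBA, Matrix.one_apply]
  obtain ⟨π, hπ0, hπeq⟩ := formal_IFT_normalized g' hg'0 hg'lin h' hh'0
  refine ⟨π, hπ0, ?_⟩
  intro i
  have hgi : g i = ∑ k, A i k • g' k := by
    rw [hg'def]
    exact (matrix_resum A B hAB g i).symm
  rw [hgi, fsubst_sum, Finset.sum_congr rfl fun k _ => fsubst_smul _ (A i k) (g' k),
    Finset.sum_congr rfl fun k _ => by rw [hπeq k]]
  rw [hh'def]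
  exact matrix_resum A B hAB h i

end IFT2
section Reflection

open MvPowerSeries

lemma coeff_fsubst_linear {σ0 T : Type*} [Fintype σ0] [DecidableEq σ0]
    [DecidableEq T] {nn : ℕ}
    (u : (σ0 ⊕ Fin nn) → MvPowerSeries (T ⊕ Fin nn) ℂ)
    (hu0 : ∀ v, MvPowerSeries.constantCoeff (σ := _) (R := ℂ) (u v) = 0)
    (hur : ∀ r, u (Sum.inr r) = MvPowerSeries.X (Sum.inr r))
    (j : Fin nn)
    (hul : ∀ b, MvPowerSeries.coeff (R := ℂ) (Finsupp.single (Sum.inr j) 1) (u (Sum.inl b)) = 0)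
    (f : MvPowerSeries (σ0 ⊕ Fin nn) ℂ) :
    MvPowerSeries.coeff (R := ℂ) (Finsupp.single (Sum.inr j) 1) (fsubst u f)
      = MvPowerSeries.coeff (R := ℂ) (Finsupp.single (Sum.inr j) 1) f := by
  rw [coeff_fsubst_sum hu0 f (le_of_eq (tdeg_single _ 1))]
  rw [Finset.sum_eq_single (Finsupp.single (Sum.inr j) 1)]
  · rw [prod_pow_single, hur, MvPowerSeries.coeff_X, if_pos rfl, mul_one]
  · intro m _ hm
    rcases Nat.lt_or_ge (tdeg m) 2 with h2 | h2
    · rcases Nat.lt_or_ge (tdeg m) 1 with h1 | h1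
      · have hm0 : m = 0 := tdeg_eq_zero_iff.1 (by omega)
        have hprod : ∏ v : (σ0 ⊕ Fin nn), u v ^ m v = 1 := by
          rw [hm0]; apply Finset.prod_eq_one; intro v _; simp
        rw [hprod, MvPowerSeries.coeff_one,
          if_neg (fun h0 => one_ne_zero (Finsupp.single_eq_zero.1 h0)), mul_zero]
      · obtain ⟨v, rfl⟩ := exists_single_of_tdeg_one (m := m) (by omega)
        rw [prod_pow_single]
        cases v with
        | inl b => rw [hul b, mul_zero]
        | inr r =>
          have hrj : r ≠ j := fun hrj => hm (by rw [hrj])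
          have hne : (Finsupp.single (Sum.inr j : T ⊕ Fin nn) 1)
              ≠ Finsupp.single (Sum.inr r : T ⊕ Fin nn) 1 := fun hh =>
            hrj (Sum.inr_injective ((Finsupp.single_left_inj one_ne_zero).1 hh)).symm
          rw [hur r, MvPowerSeries.coeff_X, if_neg hne, mul_zero]
    · rw [coeff_prodpow_zero hu0 (tdeg m) m rfl (Finsupp.single (Sum.inr j) 1)
        (by rw [tdeg_single]; omega), mul_zero]
  · intro hmem
    refine absurd (mem_Iic_unif.2 fun t => ?_) hmem
    rw [Finsupp.single_apply]
    split <;> omega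

lemma coeff_inj_inr {T : Type*} [Fintype T] [DecidableEq T] {nn : ℕ}
    (q : MvPowerSeries T ℂ) (j : Fin nn) :
    MvPowerSeries.coeff (R := ℂ) (Finsupp.single (Sum.inr j : T ⊕ Fin nn) 1)
      (fsubst (fun v : T => (MvPowerSeries.X (Sum.inl v) : MvPowerSeries (T ⊕ Fin nn) ℂ)) q)
      = 0 := by
  rw [coeff_fsubst_sum (fun v => MvPowerSeries.constantCoeff_X _) q
    (le_of_eq (tdeg_single _ 1))]
  apply Finset.sum_eq_zero
  intro m _
  rcases Nat.lt_or_ge (tdeg m) 2 with h2 | h2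
  · rcases Nat.lt_or_ge (tdeg m) 1 with h1 | h1
    · have hm0 : m = 0 := tdeg_eq_zero_iff.1 (by omega)
      have hprod : (∏ v : T, (MvPowerSeries.X (Sum.inl v)
          : MvPowerSeries (T ⊕ Fin nn) ℂ) ^ m v) = 1 := by
        rw [hm0]; apply Finset.prod_eq_one; intro v _; simp
      rw [hprod, MvPowerSeries.coeff_one,
        if_neg (fun h0 => one_ne_zero (Finsupp.single_eq_zero.1 h0)), mul_zero]
    · obtain ⟨v, rfl⟩ := exists_single_of_tdeg_one (m := m) (by omega)
      rw [prod_pow_single, MvPowerSeries.coeff_X, if_neg, mul_zero]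
      intro hh
      have := (Finsupp.single_left_inj one_ne_zero).1 hh
      exact Sum.inr_ne_inl this
  · rw [coeff_prodpow_zero (fun v => MvPowerSeries.constantCoeff_X _) (tdeg m) m rfl
      (Finsupp.single (Sum.inr j) 1) (by rw [tdeg_single]; omega), mul_zero]

lemma constantCoeff_pd {α : Type*} (s : α) (f : MvPowerSeries α ℂ) :
    MvPowerSeries.constantCoeff (σ := α) (R := ℂ) (pd s f)
      = MvPowerSeries.coeff (R := ℂ) (Finsupp.single s 1) f := by
  rw [← MvPowerSeries.coeff_zero_eq_constantCoeff, MvPowerSeries.coeff_apply]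
  show (((0 : α →₀ ℕ) s : ℂ) + 1) * MvPowerSeries.coeff (R := ℂ) (0 + Finsupp.single s 1) f = _
  simp

theorem segre_reflection {n d : ℕ}
    (Q : Fin d → MvPowerSeries (Fin n ⊕ (Fin n ⊕ Fin d)) ℂ)
    (hQ0 : ∀ j, MvPowerSeries.constantCoeff (σ := _) (R := ℂ) (Q j) = 0)
    (hreal : RealityCondition Q)
    (μ : Fin n → MvPowerSeries ((Fin n ⊕ Fin d) ⊕ Fin n) ℂ)
    (hμ0 : ∀ i, MvPowerSeries.constantCoeff (σ := _) (R := ℂ) (μ i) = 0)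
    (hμt : Matrix.det (fun i j =>
      MvPowerSeries.constantCoeff (σ := _) (R := ℂ) (pd (Sum.inr j) (μ i))) ≠ 0) :
    ∃ π : Fin n → MvPowerSeries ((Fin n ⊕ Fin d) ⊕ Fin n) ℂ,
      (∀ i, MvPowerSeries.constantCoeff (σ := _) (R := ℂ) (π i) = 0) ∧
      ∀ a : Fin n ⊕ Fin d,
        fsubst (Sum.elim (fun b => conjS (gamFam Q μ b)) π) (gamFam Q μ a)
          = MvPowerSeries.X (Sum.inl a) := by
  classical
  set γ := gamFam Q μ with hγdef
  -- constant coefficients of γ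
  have hμX0 : ∀ v : Fin n ⊕ (Fin n ⊕ Fin d), MvPowerSeries.constantCoeff (σ := _) (R := ℂ)
      (Sum.elim μ (fun a => (MvPowerSeries.X (Sum.inl a)
        : MvPowerSeries ((Fin n ⊕ Fin d) ⊕ Fin n) ℂ)) v) = 0 := by
    rintro (i | b)
    · exact hμ0 i
    · exact MvPowerSeries.constantCoeff_X _
  have hγ0 : ∀ b, MvPowerSeries.constantCoeff (σ := _) (R := ℂ) (γ b) = 0 := by
    rintro (i | k)
    · exact hμ0 i
    · show MvPowerSeries.constantCoeff (σ := _) (R := ℂ)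
        (fsubst (Sum.elim μ (fun a => MvPowerSeries.X (Sum.inl a))) (Q k)) = 0
      rw [constantCoeff_fsubst hμX0, hQ0]
  have hcγ0 : ∀ b, MvPowerSeries.constantCoeff (σ := _) (R := ℂ) (conjS (γ b)) = 0 := by
    intro b
    rw [constantCoeff_conjS, hγ0, map_zero]
  -- the implicit function theorem data
  set args : ((Fin n ⊕ Fin d) ⊕ Fin n) →
      MvPowerSeries ((((Fin n ⊕ Fin d) ⊕ Fin n)) ⊕ Fin n) ℂ :=
    Sum.elim
      (fun b => fsubst (fun v => MvPowerSeries.X (Sum.inl v)) (conjS (γ b)))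
      (fun r => MvPowerSeries.X (Sum.inr r)) with hargsdef
  have hargs0 : ∀ v, MvPowerSeries.constantCoeff (σ := _) (R := ℂ) (args v) = 0 := by
    rintro (b | r)
    · show MvPowerSeries.constantCoeff (σ := _) (R := ℂ)
        (fsubst (fun v => MvPowerSeries.X (Sum.inl v)) (conjS (γ b))) = 0
      rw [constantCoeff_fsubst (fun v => MvPowerSeries.constantCoeff_X _), hcγ0]
    · exact MvPowerSeries.constantCoeff_X _
  set G : Fin n → MvPowerSeries ((((Fin n ⊕ Fin d) ⊕ Fin n)) ⊕ Fin n) ℂ :=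
    fun i => fsubst args (μ i) with hGdef
  have hG0 : ∀ i, MvPowerSeries.constantCoeff (σ := _) (R := ℂ) (G i) = 0 := by
    intro i
    rw [hGdef]
    show MvPowerSeries.constantCoeff (σ := _) (R := ℂ) (fsubst args (μ i)) = 0
    rw [constantCoeff_fsubst hargs0, hμ0]
  have hGlin : ∀ i j, MvPowerSeries.coeff (R := ℂ) (Finsupp.single (Sum.inr j) 1) (G i)
      = MvPowerSeries.coeff (R := ℂ) (Finsupp.single (Sum.inr j) 1) (μ i) := by
    intro i j
    exact coeff_fsubst_linear (T := (Fin n ⊕ Fin d) ⊕ Fin n) args hargs0 (fun r => rfl) j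
      (fun b => coeff_inj_inr (conjS (γ b)) j) (μ i)
  have hdet : (Matrix.of fun i j =>
      MvPowerSeries.coeff (R := ℂ) (Finsupp.single (Sum.inr j) 1) (G i)).det ≠ 0 := by
    have hmateq : (Matrix.of fun i j =>
        MvPowerSeries.coeff (R := ℂ) (Finsupp.single (Sum.inr j) 1) (G i))
        = (Matrix.of fun i j =>
          MvPowerSeries.constantCoeff (σ := _) (R := ℂ) (pd (Sum.inr j) (μ i))) := by
      funext i j
      show MvPowerSeries.coeff (R := ℂ) (Finsupp.single (Sum.inr j) 1) (G i)
        = MvPowerSeries.constantCoeff (σ := _) (R := ℂ) (pd (Sum.inr j) (μ i))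
      rw [hGlin, constantCoeff_pd]
    rw [hmateq]
    exact hμt
  obtain ⟨π, hπ0, hπeq⟩ := formal_IFT G hG0 hdet
    (fun i => MvPowerSeries.X (Sum.inl (Sum.inl i)))
    (fun i => MvPowerSeries.constantCoeff_X _)
  set u : ((Fin n ⊕ Fin d) ⊕ Fin n) → MvPowerSeries ((Fin n ⊕ Fin d) ⊕ Fin n) ℂ :=
    Sum.elim (fun b => conjS (γ b)) π with hudef
  have hu0 : ∀ v, MvPowerSeries.constantCoeff (σ := _) (R := ℂ) (u v) = 0 := by
    rintro (b | r)
    · exact hcγ0 b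
    · exact hπ0 r
  have hXπ0 : ∀ v, MvPowerSeries.constantCoeff (σ := _) (R := ℂ)
      (Sum.elim (fun p => (MvPowerSeries.X p
        : MvPowerSeries ((Fin n ⊕ Fin d) ⊕ Fin n) ℂ)) π v) = 0 := by
    rintro (p | r)
    · exact MvPowerSeries.constantCoeff_X _
    · exact hπ0 r
  -- z-components
  have starZ : ∀ i, fsubst u (μ i) = MvPowerSeries.X (Sum.inl (Sum.inl i)) := by
    intro i
    have hcomp := fsubst_fsubst hargs0 hXπ0 (μ i)
    have hargs_eval : (fun v => fsubst (Sum.elim (fun p => MvPowerSeries.X p) π) (args v)) = u := by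
      funext v
      cases v with
      | inl b =>
        show fsubst (Sum.elim (fun p => MvPowerSeries.X p) π)
          (fsubst (fun v => MvPowerSeries.X (Sum.inl v)) (conjS (γ b))) = conjS (γ b)
        rw [fsubst_fsubst (fun v => MvPowerSeries.constantCoeff_X _) hXπ0]
        have : (fun v => fsubst (Sum.elim (fun p => MvPowerSeries.X p) π)
            ((MvPowerSeries.X (Sum.inl v)
              : MvPowerSeries ((((Fin n ⊕ Fin d) ⊕ Fin n)) ⊕ Fin n) ℂ)))
            = fun v => (MvPowerSeries.X v
              : MvPowerSeries ((Fin n ⊕ Fin d) ⊕ Fin n) ℂ) := by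
          funext v
          rw [fsubst_X hXπ0]
          rfl
        rw [this, fsubst_id]
      | inr r =>
        show fsubst (Sum.elim (fun p => MvPowerSeries.X p) π)
          (MvPowerSeries.X (Sum.inr r)) = π r
        rw [fsubst_X hXπ0]
        rfl
    rw [← hargs_eval, ← hcomp]
    exact hπeq i
  -- w-components via the reality condition
  have starW : ∀ k, fsubst u (γ (Sum.inr k)) = MvPowerSeries.X (Sum.inl (Sum.inr k)) := by
    intro k
    set θ : ((Fin n ⊕ Fin d) ⊕ Fin n) → MvPowerSeries ((Fin n ⊕ Fin d) ⊕ Fin n) ℂ :=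
      Sum.elim (fun b => MvPowerSeries.X (Sum.inl b)) (fun c => conjS (μ c)) with hθdef
    have hθ0 : ∀ v, MvPowerSeries.constantCoeff (σ := _) (R := ℂ) (θ v) = 0 := by
      rintro (b | c)
      · exact MvPowerSeries.constantCoeff_X _
      · rw [hθdef]
        show MvPowerSeries.constantCoeff (σ := _) (R := ℂ) (conjS (μ c)) = 0
        rw [constantCoeff_conjS, hμ0, map_zero]
    set M' : (Fin n ⊕ (Fin n ⊕ Fin d)) → MvPowerSeries ((Fin n ⊕ Fin d) ⊕ Fin n) ℂ :=
      Sum.elim (fun i => MvPowerSeries.X (Sum.inr i))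
        (Sum.elim (fun i => MvPowerSeries.X (Sum.inl (Sum.inl i)))
          (fun w => MvPowerSeries.X (Sum.inl (Sum.inr w)))) with hM'def
    have hM'0 : ∀ v, MvPowerSeries.constantCoeff (σ := _) (R := ℂ) (M' v) = 0 := by
      rintro (i | (i | w)) <;> exact MvPowerSeries.constantCoeff_X _
    set M : (Fin n ⊕ (Fin n ⊕ Fin d)) → MvPowerSeries ((Fin n ⊕ Fin d) ⊕ Fin n) ℂ :=
      Sum.elim (fun i => MvPowerSeries.X (Sum.inl (Sum.inl i)))
        (Sum.elim (fun c => MvPowerSeries.X (Sum.inr c))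
          (fun t => fsubst M' (conjS (Q t)))) with hMdef
    have hM0 : ∀ v, MvPowerSeries.constantCoeff (σ := _) (R := ℂ) (M v) = 0 := by
      rintro (i | (c | t))
      · exact MvPowerSeries.constantCoeff_X _
      · exact MvPowerSeries.constantCoeff_X _
      · show MvPowerSeries.constantCoeff (σ := _) (R := ℂ) (fsubst M' (conjS (Q t))) = 0
        rw [constantCoeff_fsubst hM'0, constantCoeff_conjS, hQ0, map_zero]
    have hrealk : fsubst M (Q k) = MvPowerSeries.X (Sum.inl (Sum.inr k)) := hreal k
    have hstep := congrArg (fsubst θ) hrealk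
    rw [fsubst_X hθ0, fsubst_fsubst hM0 hθ0] at hstep
    have hθM : (fun v => fsubst θ (M v))
        = Sum.elim (fun i => (MvPowerSeries.X (Sum.inl (Sum.inl i))
            : MvPowerSeries ((Fin n ⊕ Fin d) ⊕ Fin n) ℂ))
          (fun b => conjS (γ b)) := by
      funext v
      cases v with
      | inl i =>
        show fsubst θ (MvPowerSeries.X (Sum.inl (Sum.inl i))) = _
        rw [fsubst_X hθ0]
        rfl
      | inr b =>
        cases b with
        | inl c =>
          show fsubst θ (MvPowerSeries.X (Sum.inr c)) = conjS (γ (Sum.inl c))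
          rw [fsubst_X hθ0]
          rfl
        | inr t =>
          show fsubst θ (fsubst M' (conjS (Q t))) = conjS (γ (Sum.inr t))
          have hγt : γ (Sum.inr t)
              = fsubst (Sum.elim μ (fun a => MvPowerSeries.X (Sum.inl a))) (Q t) := rfl
          rw [fsubst_fsubst hM'0 hθ0, hγt, conjS_fsubst]
          have harg : (fun v => fsubst θ (M' v))
              = (fun s => conjS (Sum.elim μ
                  (fun a => (MvPowerSeries.X (Sum.inl a)
                    : MvPowerSeries ((Fin n ⊕ Fin d) ⊕ Fin n) ℂ)) s)) := by
            funext v'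
            cases v' with
            | inl i0 =>
              show fsubst θ (MvPowerSeries.X (Sum.inr i0)) = conjS (μ i0)
              rw [fsubst_X hθ0]
              rfl
            | inr b' =>
              cases b' with
              | inl i1 =>
                show fsubst θ (MvPowerSeries.X (Sum.inl (Sum.inl i1)))
                  = conjS (MvPowerSeries.X (Sum.inl (Sum.inl i1)))
                rw [fsubst_X hθ0, conjS_X]
                rfl
              | inr w =>
                show fsubst θ (MvPowerSeries.X (Sum.inl (Sum.inr w)))
                  = conjS (MvPowerSeries.X (Sum.inl (Sum.inr w)))
                rw [fsubst_X hθ0, conjS_X]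
                rfl
          rw [harg]
    rw [hθM] at hstep
    -- now unfold γ (inr k) and compose
    have hγk : γ (Sum.inr k)
        = fsubst (Sum.elim μ (fun a => MvPowerSeries.X (Sum.inl a))) (Q k) := rfl
    rw [hγk, fsubst_fsubst hμX0 hu0]
    have hcompose : (fun v => fsubst u (Sum.elim μ
        (fun a => (MvPowerSeries.X (Sum.inl a)
          : MvPowerSeries ((Fin n ⊕ Fin d) ⊕ Fin n) ℂ)) v))
        = Sum.elim (fun i => (MvPowerSeries.X (Sum.inl (Sum.inl i))
            : MvPowerSeries ((Fin n ⊕ Fin d) ⊕ Fin n) ℂ))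
          (fun b => conjS (γ b)) := by
      funext v
      cases v with
      | inl i =>
        show fsubst u (μ i) = _
        rw [starZ i]
        rfl
      | inr b =>
        show fsubst u (MvPowerSeries.X (Sum.inl b)) = conjS (γ b)
        rw [fsubst_X hu0]
        rfl
    rw [hcompose]
    exact hstep
  refine ⟨π, hπ0, ?_⟩
  rintro (i | k)
  · exact starZ i
  · exact starW k

end Reflection
section Main

open MvPowerSeries

lemma gamFam_const0 {n d : ℕ}
    (Q : Fin d → MvPowerSeries (Fin n ⊕ (Fin n ⊕ Fin d)) ℂ)
    (hQ0 : ∀ j, MvPowerSeries.constantCoeff (σ := _) (R := ℂ) (Q j) = 0)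
    (μ : Fin n → MvPowerSeries ((Fin n ⊕ Fin d) ⊕ Fin n) ℂ)
    (hμ0 : ∀ i, MvPowerSeries.constantCoeff (σ := _) (R := ℂ) (μ i) = 0) :
    ∀ b, MvPowerSeries.constantCoeff (σ := _) (R := ℂ) (gamFam Q μ b) = 0 := by
  rintro (i | k)
  · exact hμ0 i
  · show MvPowerSeries.constantCoeff (σ := _) (R := ℂ)
      (fsubst (Sum.elim μ (fun a => MvPowerSeries.X (Sum.inl a))) (Q k)) = 0
    rw [constantCoeff_fsubst, hQ0]
    rintro (i | b)
    · exact hμ0 i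
    · exact MvPowerSeries.constantCoeff_X _

lemma segreIter_const0 {n d : ℕ}
    (γ : (Fin n ⊕ Fin d) → MvPowerSeries ((Fin n ⊕ Fin d) ⊕ Fin n) ℂ)
    (hγ0 : ∀ b, MvPowerSeries.constantCoeff (σ := _) (R := ℂ) (γ b) = 0) :
    ∀ (j : ℕ) b, MvPowerSeries.constantCoeff (σ := _) (R := ℂ) (segreIter γ j b) = 0 := by
  intro j
  induction j with
  | zero =>
    intro b
    show MvPowerSeries.constantCoeff (σ := _) (R := ℂ) (0 : MvPowerSeries (Fin 0 × Fin n) ℂ) = 0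
    exact map_zero _
  | succ j ih =>
    intro b
    show MvPowerSeries.constantCoeff (σ := _) (R := ℂ)
      (fsubst (Sum.elim
        (fun b' => fsubst (fun p => MvPowerSeries.X ((p.1.castSucc : Fin (j+1)), p.2))
          (conjS (segreIter γ j b')))
        (fun i => MvPowerSeries.X ((Fin.last j), i))) (γ b)) = 0
    rw [constantCoeff_fsubst, hγ0]
    rintro (b' | i)
    · show MvPowerSeries.constantCoeff (σ := _) (R := ℂ)
        (fsubst (fun p => MvPowerSeries.X ((p.1.castSucc : Fin (j+1)), p.2))
          (conjS (segreIter γ j b'))) = 0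
      rw [constantCoeff_fsubst (fun p => MvPowerSeries.constantCoeff_X _),
        constantCoeff_conjS, ih b', map_zero]
    · exact MvPowerSeries.constantCoeff_X _

end Main


/-- Descending property of the iterated Segre mappings: for every `j` there is a formal
map `ξʲ(t¹,…,t^{j+1})` with
`v^{j+2}(t¹,…,t^{j+1}, ξʲ(t¹,…,t^{j+1})) = v^j(t¹,…,tʲ)`. -/
theorem iterated_segre_descend {n d : ℕ}
    (Q : Fin d → MvPowerSeries (Fin n ⊕ (Fin n ⊕ Fin d)) ℂ)
    (hQ0 : ∀ j, MvPowerSeries.constantCoeff (σ := _) (R := ℂ) (Q j) = 0)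
    (hreal : RealityCondition Q)
    (μ : Fin n → MvPowerSeries ((Fin n ⊕ Fin d) ⊕ Fin n) ℂ)
    (hμ0 : ∀ i, MvPowerSeries.constantCoeff (σ := _) (R := ℂ) (μ i) = 0)
    (hμt : Matrix.det (fun i j =>
      MvPowerSeries.constantCoeff (σ := _) (R := ℂ) (pd (Sum.inr j) (μ i))) ≠ 0)
    (j : ℕ) :
    ∃ ξ : Fin n → MvPowerSeries (Fin (j+1) × Fin n) ℂ,
      (∀ i, MvPowerSeries.constantCoeff (σ := _) (R := ℂ) (ξ i) = 0) ∧
      ∀ a : Fin n ⊕ Fin d,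
        fsubst (fun p : Fin (j+2) × Fin n =>
            if h : (p.1 : ℕ) < j + 1 then
              MvPowerSeries.X ((⟨(p.1 : ℕ), h⟩ : Fin (j+1)), p.2)
            else ξ p.2)
          (segreIter (gamFam Q μ) (j+2) a) =
        fsubst (fun p : Fin j × Fin n =>
            MvPowerSeries.X ((p.1.castSucc : Fin (j+1)), p.2))
          (segreIter (gamFam Q μ) j a) := by
  classical
  obtain ⟨π, hπ0, hπeq⟩ := segre_reflection Q hQ0 hreal μ hμ0 hμt
  set γ := gamFam Q μ with hγdef
  have hγ0 : ∀ b, MvPowerSeries.constantCoeff (σ := _) (R := ℂ) (γ b) = 0 := gamFam_const0 Q hQ0 μ hμ0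
  have hvj0 := segreIter_const0 γ hγ0
  set cast1 : Fin j × Fin n → MvPowerSeries (Fin (j+1) × Fin n) ℂ :=
    fun p => MvPowerSeries.X ((p.1.castSucc : Fin (j+1)), p.2) with hcast1def
  set V : (Fin n ⊕ Fin d) → MvPowerSeries (Fin (j+1) × Fin n) ℂ :=
    fun b => fsubst cast1 (segreIter γ j b) with hVdef
  have hV0 : ∀ b, MvPowerSeries.constantCoeff (σ := _) (R := ℂ) (V b) = 0 := by
    intro b
    show MvPowerSeries.constantCoeff (σ := _) (R := ℂ) (fsubst cast1 (segreIter γ j b)) = 0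
    rw [constantCoeff_fsubst (fun p => MvPowerSeries.constantCoeff_X _), hvj0]
  set W : ((Fin n ⊕ Fin d) ⊕ Fin n) → MvPowerSeries (Fin (j+1) × Fin n) ℂ :=
    Sum.elim V (fun i => MvPowerSeries.X ((Fin.last j), i)) with hWdef
  have hW0 : ∀ v, MvPowerSeries.constantCoeff (σ := _) (R := ℂ) (W v) = 0 := by
    rintro (b | i)
    · exact hV0 b
    · exact MvPowerSeries.constantCoeff_X _
  set ξ : Fin n → MvPowerSeries (Fin (j+1) × Fin n) ℂ := fun i => fsubst W (π i) with hξdef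
  have hξ0 : ∀ i, MvPowerSeries.constantCoeff (σ := _) (R := ℂ) (ξ i) = 0 := by
    intro i
    show MvPowerSeries.constantCoeff (σ := _) (R := ℂ) (fsubst W (π i)) = 0
    rw [constantCoeff_fsubst hW0, hπ0]
  refine ⟨ξ, hξ0, ?_⟩
  intro a
  set σm : Fin (j+2) × Fin n → MvPowerSeries (Fin (j+1) × Fin n) ℂ :=
    fun p => if h : (p.1 : ℕ) < j + 1 then
        MvPowerSeries.X ((⟨(p.1 : ℕ), h⟩ : Fin (j+1)), p.2)
      else ξ p.2 with hσmdef
  have hσm0 : ∀ p, MvPowerSeries.constantCoeff (σ := _) (R := ℂ) (σm p) = 0 := by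
    intro p
    show MvPowerSeries.constantCoeff (σ := _) (R := ℂ)
      (if h : (p.1 : ℕ) < j + 1 then
        MvPowerSeries.X ((⟨(p.1 : ℕ), h⟩ : Fin (j+1)), p.2)
      else ξ p.2) = 0
    split
    · exact MvPowerSeries.constantCoeff_X _
    · exact hξ0 p.2
  set cast2 : Fin (j+1) × Fin n → MvPowerSeries (Fin (j+2) × Fin n) ℂ :=
    fun p => MvPowerSeries.X ((p.1.castSucc : Fin (j+2)), p.2) with hcast2def
  set A2 : ((Fin n ⊕ Fin d) ⊕ Fin n) → MvPowerSeries (Fin (j+2) × Fin n) ℂ :=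
    Sum.elim (fun b => fsubst cast2 (conjS (segreIter γ (j+1) b)))
      (fun i => MvPowerSeries.X ((Fin.last (j+1)), i)) with hA2def
  have hA20 : ∀ v, MvPowerSeries.constantCoeff (σ := _) (R := ℂ) (A2 v) = 0 := by
    rintro (b | i)
    · show MvPowerSeries.constantCoeff (σ := _) (R := ℂ)
        (fsubst cast2 (conjS (segreIter γ (j+1) b))) = 0
      rw [constantCoeff_fsubst (fun p => MvPowerSeries.constantCoeff_X _),
        constantCoeff_conjS, hvj0, map_zero]
    · exact MvPowerSeries.constantCoeff_X _
  set uu : ((Fin n ⊕ Fin d) ⊕ Fin n) → MvPowerSeries ((Fin n ⊕ Fin d) ⊕ Fin n) ℂ :=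
    Sum.elim (fun b => conjS (γ b)) π with huudef
  have huu0 : ∀ v, MvPowerSeries.constantCoeff (σ := _) (R := ℂ) (uu v) = 0 := by
    rintro (b | i)
    · show MvPowerSeries.constantCoeff (σ := _) (R := ℂ) (conjS (γ b)) = 0
      rw [constantCoeff_conjS, hγ0, map_zero]
    · exact hπ0 i
  have hunfold : segreIter γ (j+2) a = fsubst A2 (γ a) := rfl
  have hgoalL : fsubst σm (segreIter γ (j+2) a)
      = fsubst (fun v => fsubst σm (A2 v)) (γ a) := by
    rw [hunfold, fsubst_fsubst hA20 hσm0]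
  have hA2σ : (fun v => fsubst σm (A2 v))
      = fun v => fsubst W (uu v) := by
    funext v
    cases v with
    | inl b =>
      show fsubst σm (fsubst cast2 (conjS (segreIter γ (j+1) b)))
        = fsubst W (conjS (γ b))
      rw [fsubst_fsubst (fun p => MvPowerSeries.constantCoeff_X _) hσm0]
      have hc2σ : (fun p => fsubst σm (cast2 p))
          = (fun p : Fin (j+1) × Fin n => (MvPowerSeries.X p
              : MvPowerSeries (Fin (j+1) × Fin n) ℂ)) := by
        funext p
        show fsubst σm (MvPowerSeries.X ((p.1.castSucc : Fin (j+2)), p.2)) = _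
        rw [fsubst_X hσm0]
        have hlt : (((p.1.castSucc : Fin (j+2)) : ℕ)) < j + 1 := by
          rw [Fin.coe_castSucc]
          exact p.1.isLt
        show (if h : (((p.1.castSucc : Fin (j+2)), p.2).1 : ℕ) < j + 1 then
            MvPowerSeries.X ((⟨((((p.1.castSucc : Fin (j+2)), p.2)).1 : ℕ), h⟩ : Fin (j+1)),
              ((p.1.castSucc : Fin (j+2)), p.2).2)
          else ξ ((p.1.castSucc : Fin (j+2)), p.2).2) = MvPowerSeries.X p
        rw [dif_pos hlt]
        have hfin : (⟨(((p.1.castSucc : Fin (j+2)) : ℕ)), hlt⟩ : Fin (j+1)) = p.1 := by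
          apply Fin.ext
          simp [Fin.coe_castSucc]
        rw [hfin]
      rw [hc2σ, fsubst_id]
      -- conjS (segreIter γ (j+1) b) = fsubst W (conjS (γ b))
      have hv1 : segreIter γ (j+1) b
          = fsubst (Sum.elim (fun b' => fsubst cast1 (conjS (segreIter γ j b')))
              (fun i => MvPowerSeries.X ((Fin.last j), i))) (γ b) := rfl
      rw [hv1, conjS_fsubst]
      have harg : (fun v' => conjS (Sum.elim
          (fun b' => fsubst cast1 (conjS (segreIter γ j b')))
          (fun i => (MvPowerSeries.X ((Fin.last j), i)
            : MvPowerSeries (Fin (j+1) × Fin n) ℂ)) v')) = W := by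
        funext v'
        cases v' with
        | inl b' =>
          show conjS (fsubst cast1 (conjS (segreIter γ j b'))) = V b'
          rw [conjS_fsubst, conjS_conjS]
          have hc1 : (fun p => conjS (cast1 p)) = cast1 := by
            funext p
            show conjS (MvPowerSeries.X ((p.1.castSucc : Fin (j+1)), p.2)) = _
            rw [conjS_X]
          rw [hc1]
        | inr i =>
          show conjS (MvPowerSeries.X ((Fin.last j), i)) = W (Sum.inr i)
          rw [conjS_X]
          rfl
      rw [harg]
    | inr i =>
      show fsubst σm (MvPowerSeries.X ((Fin.last (j+1)), i)) = fsubst W (π i)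
      rw [fsubst_X hσm0]
      show (if h : (((Fin.last (j+1) : Fin (j+2)), i).1 : ℕ) < j + 1 then
          MvPowerSeries.X ((⟨(((Fin.last (j+1) : Fin (j+2)), i).1 : ℕ), h⟩ : Fin (j+1)),
            ((Fin.last (j+1) : Fin (j+2)), i).2)
        else ξ ((Fin.last (j+1) : Fin (j+2)), i).2) = fsubst W (π i)
      rw [dif_neg]
      show ¬ ((Fin.last (j+1) : Fin (j+2)) : ℕ) < j + 1
      rw [Fin.val_last]
      omega
  rw [hgoalL, hA2σ, ← fsubst_fsubst huu0 hW0 (γ a), hπeq a, fsubst_X hW0]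
  rfl
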